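/- Let G be a chordal graph with terminal set T ⊆ V(G), and let S be a minimal subset feedback vertex set of G with respect to T, i.e., S is a subset-FVS and no proper subset of S is a subset-FVS. Let v ∈ S with v ∉ T, and suppose there exists a clique Q of G such that every T-triangle of G containing v has all its vertices in Q. Then there is exactly one T-triangle Δ of G such that Δ ∩ S = {v}. -/

import Mathlib

open SimpleGraph

variable {V : Type*}

/-- A `T`-triangle, represented as its vertex set: three pairwise adjacent
vertices at least one of which is a terminal. -/
def IsTTriangle (G : SimpleGraph V) (T Δ : Set V) : Prop :=
  ∃ a b c : V, Δ = {a, b, c} ∧ G.Adj a b ∧ G.Adj a c ∧ G.Adj b c ∧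
    (a ∈ T ∨ b ∈ T ∨ c ∈ T)

/-- The induced subgraph `G − S` contains a `T`-triangle. -/
def HasTTriangleAvoiding (G : SimpleGraph V) (T S : Set V) : Prop :=
  ∃ Δ : Set V, IsTTriangle G T Δ ∧ Δ ∩ S = ∅

/-- The induced subgraph `G − S` contains a `T`-cycle: a cycle of `G` avoiding
`S` and passing through a vertex of `T`. -/
def HasTCycleAvoiding (G : SimpleGraph V) (T S : Set V) : Prop :=
  ∃ (v : V) (c : G.Walk v v), c.IsCycle ∧ (∀ x ∈ c.support, x ∉ S) ∧
    ∃ t ∈ T, t ∈ c.support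

/-- `S` is a subset feedback vertex set of `G` with respect to `T`:
`G − S` contains no `T`-cycle. -/
def IsSubsetFVS (G : SimpleGraph V) (T S : Set V) : Prop :=
  ¬ HasTCycleAvoiding G T S

/-- A cycle has a chord: an edge of `G` between two vertices of the cycle
which is not an edge of the cycle. -/
def WalkHasChord (G : SimpleGraph V) {v : V} (c : G.Walk v v) : Prop :=
  ∃ x y : V, x ∈ c.support ∧ y ∈ c.support ∧ G.Adj x y ∧ s(x, y) ∉ c.edges

/-- A graph is chordal if every cycle of length at least four has a chord. -/
def Chordal (G : SimpleGraph V) : Prop :=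
  ∀ (v : V) (c : G.Walk v v), c.IsCycle → 4 ≤ c.length → WalkHasChord G c

/-- A bridge: an edge lying on no cycle of the graph. -/
def IsBridgeEdge (G : SimpleGraph V) (e : Sym2 V) : Prop :=
  e ∈ G.edgeSet ∧ ∀ (v : V) (c : G.Walk v v), c.IsCycle → e ∉ c.edges

/-- `(K, I)` is a split partition of `G`: `K` is a clique, `I` an independent
set, and they partition the vertex set. -/
def IsSplitPartition (G : SimpleGraph V) (K I : Set V) : Prop :=
  K ∪ I = Set.univ ∧ K ∩ I = ∅ ∧ G.IsClique K ∧ I.Pairwise fun a b => ¬ G.Adj a b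

/-- The closed neighbourhood `N[v]` of a vertex. -/
def closedNbhd (G : SimpleGraph V) (v : V) : Set V := insert v (G.neighborSet v)

/-- A vertex is simplicial if its closed neighbourhood is a clique. -/
def IsSimplicial (G : SimpleGraph V) (v : V) : Prop := G.IsClique (closedNbhd G v)

/-- A maximal clique. -/
def IsMaxClique (G : SimpleGraph V) (C : Set V) : Prop :=
  G.IsClique C ∧ ∀ C' : Set V, G.IsClique C' → C ⊆ C' → C' = C

/-- A matching, as a set of edges of `G` no two of which share an endvertex. -/
def IsEdgeMatching (G : SimpleGraph V) (M : Set (Sym2 V)) : Prop :=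
  M ⊆ G.edgeSet ∧ ∀ e ∈ M, ∀ f ∈ M, e ≠ f → ∀ z : V, z ∈ e → z ∉ f

/-- A set of edges saturates a vertex if some edge of it is incident with it. -/
def Saturates (M : Set (Sym2 V)) (z : V) : Prop := ∃ e ∈ M, z ∈ e

/-- `M` is a `t`-expansion of `X` into `Y`: every edge of `M` goes between `X`
and `Y`, every vertex of `X` is incident with exactly `t` edges of `M`, and the
edges of `M` are incident with exactly `t * |X|` distinct vertices of `Y`. -/
def IsExpansion (G : SimpleGraph V) (t : ℕ) (X Y : Set V) (M : Set (Sym2 V)) : Prop :=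
  M ⊆ G.edgeSet ∧ (∀ e ∈ M, ∃ x ∈ X, ∃ y ∈ Y, e = s(x, y)) ∧
    (∀ x ∈ X, {e ∈ M | x ∈ e}.ncard = t) ∧
    {y ∈ Y | Saturates M y}.ncard = t * X.ncard

section Aux
variable {G : SimpleGraph V}

lemma tri_cycle {a b c : V} (hab : G.Adj a b) (hbc : G.Adj b c)
    (hca : G.Adj c a) : ∃ w : G.Walk a a, w.IsCycle ∧ w.support = [a, b, c, a] := by
  refine ⟨.cons hab (.cons hbc (.cons hca .nil)), ?_, rfl⟩
  rw [Walk.cons_isCycle_iff]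
  constructor
  · rw [Walk.isPath_def]
    simp [hab.ne, hbc.ne, hca.ne, hab.ne', hbc.ne', hca.ne']
  · simp only [Walk.edges_cons, Walk.edges_nil, List.mem_cons, List.not_mem_nil, or_false]
    rintro (h | h) <;> rw [Sym2.eq_iff] at h <;>
      rcases h with ⟨h1, h2⟩ | ⟨h1, h2⟩ <;> subst_vars <;>
      first | exact hbc.ne rfl | exact hca.ne rfl | exact hab.ne rfl

lemma tri_of_cycle3 {u : V} {c : G.Walk u u} (hc : c.IsCycle) (h3 : c.length = 3) :
    ∃ a b d : V, G.Adj a b ∧ G.Adj a d ∧ G.Adj b d ∧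
      (∀ z, z ∈ c.support ↔ z = a ∨ z = b ∨ z = d) := by
  cases c with
  | nil => simp at h3
  | cons h1 r =>
    cases r with
    | nil => simp at h3
    | cons h2 r' =>
      cases r' with
      | nil => simp at h3
      | cons h3' r'' =>
        simp only [Walk.length_cons] at h3
        have h0 : r''.length = 0 := by omega
        have := Walk.eq_of_length_eq_zero h0
        subst this
        rw [Walk.length_eq_zero_iff] at h0
        obtain rfl := Walk.nil_iff_eq_nil.mp h0
        refine ⟨_, _, _, h1, h3'.symm, h2, ?_⟩
        intro z
        simp only [Walk.support_cons, Walk.support_nil, List.mem_cons,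
          List.not_mem_nil, or_false]
        tauto

lemma mem_tail_of_closed {u : V} {c : G.Walk u u} (hne : ¬c.Nil) :
    u ∈ c.support.tail := by
  cases c with
  | nil => exact absurd .nil hne
  | cons h r => simpa using r.end_mem_support

lemma mem_support_iff_mem_tail {u : V} {c : G.Walk u u} (hne : ¬c.Nil) {z : V} :
    z ∈ c.support ↔ z ∈ c.support.tail := by
  rw [Walk.support_eq_cons, List.mem_cons]
  constructor
  · rintro (rfl | h)
    · exact mem_tail_of_closed hne
    · exact h
  · exact Or.inr

lemma edge_of_length_one {x y : V} {p : G.Walk x y} (h : p.length = 1) :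
    s(x, y) ∈ p.edges := by
  cases p with
  | nil => simp at h
  | cons h' r =>
    simp only [Walk.length_cons, add_eq_right] at h
    have := Walk.eq_of_length_eq_zero h
    subst this
    simp

lemma split_cycle {x y u : V} (hadj : G.Adj x y) (c : G.Walk u u)
    (hc : c.IsCycle) (hx : x ∈ c.support) (hy : y ∈ c.support)
    (hch : s(x, y) ∉ c.edges) :
    ∃ (d₁ : G.Walk y y) (d₂ : G.Walk x x), d₁.IsCycle ∧ d₂.IsCycle ∧
      d₁.length < c.length ∧ d₂.length < c.length ∧
      (∀ z ∈ d₁.support, z ∈ c.support) ∧ (∀ z ∈ d₂.support, z ∈ c.support) ∧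
      (∀ z ∈ c.support, z ∈ d₁.support ∨ z ∈ d₂.support) := by
  classical
  set c' := c.rotate x hx with hc'def
  have hc' : c'.IsCycle := hc.rotate hx
  have hxy : x ≠ y := hadj.ne
  -- membership transfer between c and c'
  have hsupt : List.Perm c'.support.tail c.support.tail :=
    (Walk.support_rotate c x hx).perm
  have hedg : List.Perm c'.edges c.edges := (Walk.rotate_edges c x hx).perm
  have hmem : ∀ z : V, z ∈ c'.support ↔ z ∈ c.support := by
    intro z
    rw [mem_support_iff_mem_tail hc'.not_nil, mem_support_iff_mem_tail hc.not_nil,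
      hsupt.mem_iff]
  have hlen : c'.length = c.length := by
    have h1 : (c.takeUntil x hx).length + (c.dropUntil x hx).length = c.length := by
      conv_rhs => rw [← Walk.take_spec c hx]
      rw [Walk.length_append]
    have h2 : c'.length
        = (c.dropUntil x hx).length + (c.takeUntil x hx).length := by
      rw [hc'def, Walk.rotate, Walk.length_append]
    omega
  have hy' : y ∈ c'.support := (hmem y).mpr hy
  set p := c'.takeUntil y hy' with hpdef
  set q := c'.dropUntil y hy' with hqdef
  have hpq : p.append q = c' := Walk.take_spec c' hy'
  have htail : c'.support.tail = p.support.tail ++ q.support.tail := by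
    rw [← hpq, Walk.tail_support_append]
  have hnodup : (p.support.tail ++ q.support.tail).Nodup := by
    rw [← htail]; exact hc'.support_nodup
  rw [List.nodup_append] at hnodup
  obtain ⟨hpnd, hqnd, hdisj⟩ := hnodup
  have hyp : y ∈ p.support.tail := Walk.end_mem_tail_support_of_ne hxy p
  have hxq : x ∈ q.support.tail := Walk.end_mem_tail_support_of_ne hxy.symm q
  have hppath : p.IsPath := by
    rw [Walk.isPath_def, Walk.support_eq_cons, List.nodup_cons]
    exact ⟨fun h => hdisj x h x hxq rfl, hpnd⟩
  have hqpath : q.IsPath := by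
    rw [Walk.isPath_def, Walk.support_eq_cons, List.nodup_cons]
    exact ⟨fun h => hdisj y hyp y h rfl, hqnd⟩
  have hpe : ∀ e ∈ p.edges, e ∈ c.edges := fun e he =>
    hedg.mem_iff.mp (Walk.edges_takeUntil_subset c' hy' he)
  have hqe : ∀ e ∈ q.edges, e ∈ c.edges := fun e he =>
    hedg.mem_iff.mp (Walk.edges_dropUntil_subset c' hy' he)
  have hplen : 2 ≤ p.length := by
    by_contra h
    interval_cases hpl : p.length
    · exact hxy (Walk.eq_of_length_eq_zero hpl)
    · exact hch (hpe _ (edge_of_length_one hpl))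
  have hqlen : 2 ≤ q.length := by
    by_contra h
    interval_cases hql : q.length
    · exact hxy.symm (Walk.eq_of_length_eq_zero hql)
    · have := hqe _ (edge_of_length_one hql)
      rw [Sym2.eq_swap] at this
      exact hch this
  have hlensum : p.length + q.length = c.length := by
    rw [← hlen, ← hpq, Walk.length_append]
  refine ⟨Walk.cons hadj.symm p, Walk.cons hadj q, ?_, ?_, ?_, ?_, ?_, ?_, ?_⟩
  · rw [Walk.cons_isCycle_iff]
    refine ⟨hppath, fun h => ?_⟩
    rw [Sym2.eq_swap] at h
    exact hch (hpe _ h)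
  · rw [Walk.cons_isCycle_iff]
    exact ⟨hqpath, fun h => hch (hqe _ h)⟩
  · simpa using by omega
  · simpa using by omega
  · intro z hz
    rw [Walk.support_cons, List.mem_cons] at hz
    rcases hz with rfl | hz
    · exact hy
    · exact (hmem z).mp (Walk.support_takeUntil_subset c' hy' hz)
  · intro z hz
    rw [Walk.support_cons, List.mem_cons] at hz
    rcases hz with rfl | hz
    · exact hx
    · exact (hmem z).mp (Walk.support_dropUntil_subset c' hy' hz)
  · intro z hz
    have : z ∈ c'.support.tail := (mem_support_iff_mem_tail hc.not_nil).mp hz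
      |> fun h => hsupt.mem_iff.mpr h
    rw [htail, List.mem_append] at this
    rcases this with h | h
    · left
      rw [Walk.support_cons, List.mem_cons]
      exact Or.inr (List.mem_of_mem_tail h)
    · right
      rw [Walk.support_cons, List.mem_cons]
      exact Or.inr (List.mem_of_mem_tail h)

/-- From a `T`-triangle whose vertices avoid `S`, get a `T`-cycle avoiding `S`. -/
lemma triangle_gives_cycle {T S Δ : Set V} (hΔ : IsTTriangle G T Δ)
    (hav : ∀ z ∈ Δ, z ∉ S) : HasTCycleAvoiding G T S := by
  obtain ⟨a, b, c, rfl, hab, hac, hbc, hT⟩ := hΔ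
  obtain ⟨w, hw, hws⟩ := tri_cycle hab hbc hac.symm
  refine ⟨a, w, hw, ?_, ?_⟩
  · intro z hz
    rw [hws] at hz
    apply hav
    simp only [List.mem_cons, List.not_mem_nil, or_false] at hz
    rcases hz with rfl | rfl | rfl | rfl <;> simp
  · rcases hT with h | h | h
    · exact ⟨a, h, by rw [hws]; simp⟩
    · exact ⟨b, h, by rw [hws]; simp⟩
    · exact ⟨c, h, by rw [hws]; simp⟩

lemma descend (hG : Chordal G) (T : Set V) :
    ∀ (n : ℕ) (u : V) (c : G.Walk u u), c.length ≤ n → c.IsCycle →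
      (∃ t ∈ T, t ∈ c.support) →
      ∃ Δ : Set V, IsTTriangle G T Δ ∧ ∀ z ∈ Δ, z ∈ c.support := by
  intro n
  induction n with
  | zero => intro u c hl hc _; have := hc.three_le_length; omega
  | succ n ih =>
    intro u c hl hc ht
    by_cases h4 : 4 ≤ c.length
    · obtain ⟨x, y, hx, hy, hadj, hch⟩ := hG u c hc h4
      obtain ⟨d₁, d₂, hd₁, hd₂, hl₁, hl₂, hs₁, hs₂, hcov⟩ :=
        split_cycle hadj c hc hx hy hch
      obtain ⟨t, htT, hts⟩ := ht
      rcases hcov t hts with h | h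
      · obtain ⟨Δ, hΔ, hsub⟩ := ih y d₁ (by omega) hd₁ ⟨t, htT, h⟩
        exact ⟨Δ, hΔ, fun z hz => hs₁ z (hsub z hz)⟩
      · obtain ⟨Δ, hΔ, hsub⟩ := ih x d₂ (by omega) hd₂ ⟨t, htT, h⟩
        exact ⟨Δ, hΔ, fun z hz => hs₂ z (hsub z hz)⟩
    · have h3 : c.length = 3 := by have := hc.three_le_length; omega
      obtain ⟨a, b, d, hab, had, hbd, hsupp⟩ := tri_of_cycle3 hc h3
      obtain ⟨t, htT, hts⟩ := ht
      refine ⟨{a, b, d}, ⟨a, b, d, rfl, hab, had, hbd, ?_⟩, ?_⟩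
      · rcases (hsupp t).mp hts with rfl | rfl | rfl <;> tauto
      · intro z hz
        rw [hsupp]
        simpa using hz

end Aux

section Aux2
variable {G : SimpleGraph V}

/-- Find a terminal and a third vertex in a `T`-triangle containing the
non-terminal `v`. -/
lemma tri_structure {T Δ : Set V} (hΔ : IsTTriangle G T Δ) {v : V}
    (hv : v ∈ Δ) (hvT : v ∉ T) :
    ∃ t u : V, t ∈ T ∧ t ∈ Δ ∧ u ∈ Δ ∧ t ≠ u ∧ t ≠ v ∧ u ≠ v := by
  obtain ⟨a, b, c, rfl, hab, hac, hbc, hT⟩ := hΔ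
  simp only [Set.mem_insert_iff, Set.mem_singleton_iff] at hv
  have hmem : ∀ z : V, z = a ∨ z = b ∨ z = c → z ∈ ({a, b, c} : Set V) := by
    intro z hz; simp [hz]
  rcases hv with rfl | rfl | rfl
  · rcases hT with h | h | h
    · exact absurd h hvT
    · exact ⟨b, c, h, by simp, by simp, hbc.ne, hab.ne', hac.ne'⟩
    · exact ⟨c, b, h, by simp, by simp, hbc.ne', hac.ne', hab.ne'⟩
  · rcases hT with h | h | h
    · exact ⟨a, c, h, by simp, by simp, hac.ne, hab.ne, hbc.ne'⟩
    · exact absurd h hvT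
    · exact ⟨c, a, h, by simp, by simp, hac.ne', hbc.ne', hab.ne⟩
  · rcases hT with h | h | h
    · exact ⟨a, b, h, by simp, by simp, hab.ne, hac.ne, hbc.ne⟩
    · exact ⟨b, a, h, by simp, by simp, hab.ne', hbc.ne, hac.ne⟩
    · exact absurd h hvT

end Aux2

/-- a non-terminal vertex of a minimal subset-FVS whose
`T`-triangles all lie inside a common clique is the sole solution vertex of a
unique `T`-triangle. -/
theorem stmt12 {V : Type} [Fintype V] (G : SimpleGraph V) (T : Set V)
    (hG : Chordal G) (S : Set V)
    (hS : IsSubsetFVS G T S)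
    (hmin : ∀ S' : Set V, S' ⊂ S → ¬ IsSubsetFVS G T S')
    (v : V) (hvS : v ∈ S) (hvT : v ∉ T)
    (Q : Set V) (hQ : G.IsClique Q)
    (hQv : ∀ Δ : Set V, IsTTriangle G T Δ → v ∈ Δ → Δ ⊆ Q) :
    ∃! Δ : Set V, IsTTriangle G T Δ ∧ Δ ∩ S = {v} := by
  classical
  -- Existence
  have hss : S \ {v} ⊂ S := Set.sdiff_singleton_ssubset.mpr hvS
  have hcyc : HasTCycleAvoiding G T (S \ {v}) := by
    by_contra h
    exact hmin _ hss h
  obtain ⟨u, c, hc, hav, ht⟩ := hcyc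
  obtain ⟨Δ₀, hΔ₀, hsub₀⟩ := descend hG T c.length u c le_rfl hc ht
  have hΔ₀S : ∀ z ∈ Δ₀, z ∈ S → z = v := by
    intro z hz hzS
    have := hav z (hsub₀ z hz)
    by_contra hne
    exact this ⟨hzS, hne⟩
  have hvΔ₀ : v ∈ Δ₀ := by
    by_contra hv
    exact hS (triangle_gives_cycle hΔ₀ (fun z hz hzS => hv (hΔ₀S z hz hzS ▸ hz)))
  have hΔ₀cap : Δ₀ ∩ S = {v} := by
    apply Set.eq_singleton_iff_unique_mem.mpr
    exact ⟨⟨hvΔ₀, hvS⟩, fun z ⟨hz1, hz2⟩ => hΔ₀S z hz1 hz2⟩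
  -- Uniqueness helper
  have key : ∀ Δ₁ Δ₂ : Set V, IsTTriangle G T Δ₁ → Δ₁ ∩ S = {v} →
      IsTTriangle G T Δ₂ → Δ₂ ∩ S = {v} → ∀ w ∈ Δ₂, w ∉ Δ₁ → False := by
    intro Δ₁ Δ₂ h₁ hc₁ h₂ hc₂ w hw hwn
    have hvΔ₁ : v ∈ Δ₁ := by
      have : v ∈ Δ₁ ∩ S := by rw [hc₁]; rfl
      exact this.1
    have hvΔ₂ : v ∈ Δ₂ := by
      have : v ∈ Δ₂ ∩ S := by rw [hc₂]; rfl
      exact this.1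
    obtain ⟨t, u', htT, htΔ, huΔ, htu, htv, huv⟩ := tri_structure h₁ hvΔ₁ hvT
    have hQ₁ : Δ₁ ⊆ Q := hQv Δ₁ h₁ hvΔ₁
    have hQ₂ : Δ₂ ⊆ Q := hQv Δ₂ h₂ hvΔ₂
    have hnotS : ∀ z, z ∈ Δ₁ ∨ z ∈ Δ₂ → z ≠ v → z ∉ S := by
      rintro z (hz | hz) hzv hzS
      · exact hzv (by have : z ∈ Δ₁ ∩ S := ⟨hz, hzS⟩; rwa [hc₁] at this)
      · exact hzv (by have : z ∈ Δ₂ ∩ S := ⟨hz, hzS⟩; rwa [hc₂] at this)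
    have hwt : w ≠ t := fun h => hwn (h ▸ htΔ)
    have hwu : w ≠ u' := fun h => hwn (h ▸ huΔ)
    have hwv : w ≠ v := fun h => hwn (h ▸ hvΔ₁)
    have htri : IsTTriangle G T {t, u', w} :=
      ⟨t, u', w, rfl, hQ (hQ₁ htΔ) (hQ₁ huΔ) htu, hQ (hQ₁ htΔ) (hQ₂ hw) hwt.symm,
        hQ (hQ₁ huΔ) (hQ₂ hw) hwu.symm, Or.inl htT⟩
    apply hS
    apply triangle_gives_cycle htri
    intro z hz
    simp only [Set.mem_insert_iff, Set.mem_singleton_iff] at hz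
    rcases hz with rfl | rfl | rfl
    · exact hnotS z (Or.inl htΔ) htv
    · exact hnotS z (Or.inl huΔ) huv
    · exact hnotS z (Or.inr hw) hwv
  refine ⟨Δ₀, ⟨hΔ₀, hΔ₀cap⟩, ?_⟩
  rintro Δ ⟨hΔ, hΔcap⟩
  by_contra hne
  by_cases hsub : Δ ⊆ Δ₀
  · obtain ⟨w, hw1, hw2⟩ := Set.not_subset.mp fun hsub' => hne (hsub.antisymm hsub')
    exact key Δ Δ₀ hΔ hΔcap hΔ₀ hΔ₀cap w hw1 hw2
  · obtain ⟨w, hw1, hw2⟩ := Set.not_subset.mp hsub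
    exact key Δ₀ Δ hΔ₀ hΔ₀cap hΔ hΔcap w hw1 hw2
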